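/- Let u be a smooth positive function of x on an open interval J with a fixed antiderivative U (U' = u), and let A, B, C, D be real constants. Let W ⊆ J × ℝ × ℝ (coordinates (x,y,z)) be a connected open set on which Az + B > 0 and C·U(x) + D > 0. Then the Riemannian metric g = ( u(x)²(Az+B)² / (C·U(x)+D)² ) dx² + ( (C·U(x)+D)² / (Az+B)² ) dy² + dz² on W is locally conformally flat. -/

import Mathlib

open scoped ContDiff Matrix

/-- The Jacobian matrix of a map `ψ : ℝ³ → ℝ³` at a point. -/
noncomputable def Dmat (ψ : (Fin 3 → ℝ) → (Fin 3 → ℝ)) (q : Fin 3 → ℝ) :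
    Matrix (Fin 3) (Fin 3) ℝ :=
  fun i j => fderiv ℝ ψ q (Pi.single j 1) i

/-- A smooth metric `G` on an open set `U ⊆ ℝ³` is locally conformally flat if every point of
`U` has an open neighborhood `V ⊆ U` carrying a smooth positive function `lam` and a smooth
injective map `ψ : V → ℝ³` with `(Dψ)ᵀ (Dψ) = lam • G` on `V`. -/
def IsLocConfFlat (U : Set (Fin 3 → ℝ)) (G : (Fin 3 → ℝ) → Matrix (Fin 3) (Fin 3) ℝ) : Prop :=
  ∀ p ∈ U, ∃ V : Set (Fin 3 → ℝ), IsOpen V ∧ p ∈ V ∧ V ⊆ U ∧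
    ∃ (lam : (Fin 3 → ℝ) → ℝ) (ψ : (Fin 3 → ℝ) → (Fin 3 → ℝ)),
      ContDiffOn ℝ ∞ lam V ∧ (∀ q ∈ V, 0 < lam q) ∧
      ContDiffOn ℝ ∞ ψ V ∧ Set.InjOn ψ V ∧
      ∀ q ∈ V, (Dmat ψ q)ᵀ * (Dmat ψ q) = lam q • G q

section AuxLCF
open ContinuousLinearMap Real

lemma fin3_mk0 (h : 0 < 3) : (⟨0, h⟩ : Fin 3) = 0 := rfl
lemma fin3_mk1 (h : 1 < 3) : (⟨1, h⟩ : Fin 3) = 1 := rfl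
lemma fin3_mk2 (h : 2 < 3) : (⟨2, h⟩ : Fin 3) = 2 := rfl

lemma coord_fderiv {q : Fin 3 → ℝ} {k : Fin 3} {f : ℝ → ℝ} {f' : ℝ}
    (hf : HasDerivAt f f' (q k)) :
    HasFDerivAt (fun q : Fin 3 → ℝ => f (q k)) (f' • (proj k : (Fin 3 → ℝ) →L[ℝ] ℝ)) q :=
  hf.comp_hasFDerivAt q (hasFDerivAt_apply (𝕜 := ℝ) k q)

lemma sep_deriv (q : Fin 3 → ℝ) {f g : ℝ → ℝ} {f' g' : ℝ}
    (hf : HasDerivAt f f' (q 0)) (hg : HasDerivAt g g' (q 2)) :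
    ∃ L : (Fin 3 → ℝ) →L[ℝ] ℝ, HasFDerivAt (fun q : Fin 3 → ℝ => f (q 0) * g (q 2)) L q ∧
      L (Pi.single 0 1) = f' * g (q 2) ∧ L (Pi.single 1 1) = 0 ∧
      L (Pi.single 2 1) = f (q 0) * g' := by
  refine ⟨_, (coord_fderiv hf).mul (coord_fderiv hg), ?_, ?_, ?_⟩ <;>
    simp [Pi.single_apply] <;> ring

lemma sum_deriv (q : Fin 3 → ℝ) {f g : ℝ → ℝ} {f' g' : ℝ}
    (hf : HasDerivAt f f' (q 0)) (hg : HasDerivAt g g' (q 2)) :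
    ∃ L : (Fin 3 → ℝ) →L[ℝ] ℝ, HasFDerivAt (fun q : Fin 3 → ℝ => f (q 0) + g (q 2)) L q ∧
      L (Pi.single 0 1) = f' ∧ L (Pi.single 1 1) = 0 ∧
      L (Pi.single 2 1) = g' := by
  refine ⟨_, (coord_fderiv hf).add (coord_fderiv hg), ?_, ?_, ?_⟩ <;>
    simp [Pi.single_apply]

lemma key (V : Set (Fin 3 → ℝ))
    (g0 g1 g2 lam r θ rx rz tx tz : (Fin 3 → ℝ) → ℝ) (c : ℝ)
    (hr : ∀ q ∈ V, ∃ L : (Fin 3 → ℝ) →L[ℝ] ℝ, HasFDerivAt r L q ∧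
      L (Pi.single 0 1) = rx q ∧ L (Pi.single 1 1) = 0 ∧ L (Pi.single 2 1) = rz q)
    (hθ : ∀ q ∈ V, ∃ L : (Fin 3 → ℝ) →L[ℝ] ℝ, HasFDerivAt θ L q ∧
      L (Pi.single 0 1) = tx q ∧ L (Pi.single 1 1) = 0 ∧ L (Pi.single 2 1) = tz q)
    (hrpos : ∀ q ∈ V, 0 < r q)
    (hrC : ContDiffOn ℝ ∞ r V) (hθC : ContDiffOn ℝ ∞ θ V)
    (hI1 : ∀ q ∈ V, rx q ^ 2 + (r q * tx q) ^ 2 = lam q * g0 q)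
    (hI2 : ∀ q ∈ V, rz q ^ 2 + (r q * tz q) ^ 2 = lam q * g2 q)
    (hI3 : ∀ q ∈ V, rx q * rz q + r q ^ 2 * (tx q * tz q) = 0)
    (hI4 : ∀ q ∈ V, c ^ 2 = lam q * g1 q)
    (hwin : ∀ q ∈ V, ∀ q' ∈ V, |θ q - θ q'| < 2 * Real.pi)
    (hdet : ∀ q ∈ V, ∀ q' ∈ V, r q = r q' → θ q = θ q' → q 1 = q' 1 → q = q')
    (hc : c ≠ 0) :
    ContDiffOn ℝ ∞ (fun q => ![r q * Real.cos (θ q), c * q 1, r q * Real.sin (θ q)]) V ∧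
    Set.InjOn (fun q => ![r q * Real.cos (θ q), c * q 1, r q * Real.sin (θ q)]) V ∧
      ∀ q ∈ V, (Dmat (fun q => ![r q * Real.cos (θ q), c * q 1, r q * Real.sin (θ q)]) q)ᵀ *
          (Dmat (fun q => ![r q * Real.cos (θ q), c * q 1, r q * Real.sin (θ q)]) q)
        = lam q • Matrix.diagonal ![g0 q, g1 q, g2 q] := by
  set ψ : (Fin 3 → ℝ) → (Fin 3 → ℝ) :=
    fun q => ![r q * Real.cos (θ q), c * q 1, r q * Real.sin (θ q)] with hψ
  refine ⟨?_, ?_, ?_⟩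
  · -- smoothness
    rw [hψ]
    have h0 : ContDiffOn ℝ ∞ (fun q => r q * Real.cos (θ q)) V :=
      hrC.mul (Real.contDiff_cos.comp_contDiffOn hθC)
    have h2 : ContDiffOn ℝ ∞ (fun q => r q * Real.sin (θ q)) V :=
      hrC.mul (Real.contDiff_sin.comp_contDiffOn hθC)
    have h1 : ContDiffOn ℝ ∞ (fun q : Fin 3 → ℝ => c * q 1) V :=
      (contDiff_const.mul ((ContinuousLinearMap.proj 1 :
        (Fin 3 → ℝ) →L[ℝ] ℝ).contDiff)).contDiffOn
    apply contDiffOn_pi.2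
    intro i
    fin_cases i
    · exact h0
    · exact h1
    · exact h2
  · -- injectivity
    intro q hq q' hq' he
    have e0 : r q * Real.cos (θ q) = r q' * Real.cos (θ q') := by
      have := congrFun he 0; simpa [hψ] using this
    have e1 : c * q 1 = c * q' 1 := by
      have := congrFun he 1; simpa [hψ] using this
    have e2 : r q * Real.sin (θ q) = r q' * Real.sin (θ q') := by
      have := congrFun he 2; simpa [hψ] using this
    have p1 := Real.sin_sq_add_cos_sq (θ q)
    have p2 := Real.sin_sq_add_cos_sq (θ q')
    have hrq := hrpos q hq
    have hrq' := hrpos q' hq'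
    have s1 : r q ^ 2 = (r q * Real.cos (θ q)) ^ 2 + (r q * Real.sin (θ q)) ^ 2 := by
      linear_combination (-(r q ^ 2)) * p1
    have s2 : r q' ^ 2 = (r q' * Real.cos (θ q')) ^ 2 + (r q' * Real.sin (θ q')) ^ 2 := by
      linear_combination (-(r q' ^ 2)) * p2
    have h2' : r q ^ 2 = r q' ^ 2 := by rw [s1, s2, e0, e2]
    have hf : (r q - r q') * (r q + r q') = 0 := by linear_combination h2'
    have hrr : r q = r q' := by
      rcases mul_eq_zero.1 hf with h | h
      · linarith
      · linarith
    have hcos : Real.cos (θ q) = Real.cos (θ q') := by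
      rw [hrr] at e0; exact mul_left_cancel₀ (ne_of_gt hrq') e0
    have hsin : Real.sin (θ q) = Real.sin (θ q') := by
      rw [hrr] at e2; exact mul_left_cancel₀ (ne_of_gt hrq') e2
    have hone : Real.cos (θ q - θ q') = 1 := by
      rw [Real.cos_sub, hcos, hsin]; nlinarith
    have hwin' := hwin q hq q' hq'
    rw [abs_lt] at hwin'
    have : θ q - θ q' = 0 :=
      (Real.cos_eq_one_iff_of_lt_of_lt (by linarith) (by linarith)).1 hone
    exact hdet q hq q' hq' hrr (by linarith) (mul_left_cancel₀ hc e1)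
  · -- the metric identity
    intro q hq
    obtain ⟨Lr, hLr, er0, er1, er2⟩ := hr q hq
    obtain ⟨Lθ, hLθ, et0, et1, et2⟩ := hθ q hq
    have hcosθ : HasFDerivAt (fun q => Real.cos (θ q)) ((-Real.sin (θ q)) • Lθ) q :=
      (Real.hasDerivAt_cos (θ q)).comp_hasFDerivAt q hLθ
    have hsinθ : HasFDerivAt (fun q => Real.sin (θ q)) ((Real.cos (θ q)) • Lθ) q :=
      (Real.hasDerivAt_sin (θ q)).comp_hasFDerivAt q hLθ
    have h0 : HasFDerivAt (fun q => r q * Real.cos (θ q))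
        (r q • ((-Real.sin (θ q)) • Lθ) + Real.cos (θ q) • Lr) q := hLr.mul hcosθ
    have h2 : HasFDerivAt (fun q => r q * Real.sin (θ q))
        (r q • ((Real.cos (θ q)) • Lθ) + Real.sin (θ q) • Lr) q := hLr.mul hsinθ
    have h1 : HasFDerivAt (fun q : Fin 3 → ℝ => c * q 1) (c • (proj 1 : (Fin 3 → ℝ) →L[ℝ] ℝ)) q := by
      simpa using (hasFDerivAt_apply (𝕜 := ℝ) 1 q).const_mul c
    set L : Fin 3 → ((Fin 3 → ℝ) →L[ℝ] ℝ) :=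
      ![r q • ((-Real.sin (θ q)) • Lθ) + Real.cos (θ q) • Lr, c • (proj 1 : (Fin 3 → ℝ) →L[ℝ] ℝ),
        r q • ((Real.cos (θ q)) • Lθ) + Real.sin (θ q) • Lr] with hL
    have hΦ : HasFDerivAt ψ (ContinuousLinearMap.pi L) q := by
      apply hasFDerivAt_pi.2
      intro i
      fin_cases i
      · exact h0
      · exact h1
      · exact h2
    have hfd : fderiv ℝ ψ q = ContinuousLinearMap.pi L := hΦ.fderiv
    have hDm : ∀ i j, Dmat ψ q i j = L i (Pi.single j 1) := by
      intro i j; rw [Dmat, hfd]; rfl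
    have pyth := Real.sin_sq_add_cos_sq (θ q)
    have i1 := hI1 q hq
    have i2 := hI2 q hq
    have i3 := hI3 q hq
    have i4 := hI4 q hq
    ext i j
    fin_cases i <;> fin_cases j <;>
      simp only [fin3_mk0, fin3_mk1, fin3_mk2, Matrix.mul_apply, Fin.sum_univ_three,
        Matrix.transpose_apply, hDm, hL,
        Matrix.cons_val_zero, Matrix.cons_val_one, Matrix.head_cons, Matrix.cons_val_two,
        Matrix.tail_cons, ContinuousLinearMap.add_apply, ContinuousLinearMap.smul_apply,
        ContinuousLinearMap.proj_apply, er0, er1, er2, et0, et1, et2,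
        Pi.single_eq_same, Pi.single_apply, Matrix.smul_apply,
        Matrix.diagonal_apply, smul_eq_mul] <;>
      norm_num [Fin.ext_iff]
    · linear_combination (rx q ^ 2 + (r q * tx q) ^ 2) * pyth + i1
    · linear_combination (rx q * rz q + r q ^ 2 * (tx q * tz q)) * pyth + i3
    · linear_combination i4
    · linear_combination (rx q * rz q + r q ^ 2 * (tx q * tz q)) * pyth + i3
    · linear_combination (rz q ^ 2 + (r q * tz q) ^ 2) * pyth + i2

end AuxLCF

open ContinuousLinearMap Real

set_option maxHeartbeats 2000000 in
/-- For `u > 0` smooth on an open interval `J` with antiderivative `U₀`, and constants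
`A, B, C, D`, the metric
`g = (u(x)²(Az+B)²/(C·U₀(x)+D)²) dx² + ((C·U₀(x)+D)²/(Az+B)²) dy² + dz²`
is locally conformally flat on any connected open set `W` (with `x`-coordinates in `J`) on
which `Az+B > 0` and `C·U₀(x)+D > 0`. -/
theorem stmt5 (J : Set ℝ) (hJopen : IsOpen J) (hJconn : IsPreconnected J)
    (u U₀ : ℝ → ℝ) (hu : ContDiffOn ℝ ∞ u J) (hupos : ∀ x ∈ J, 0 < u x)
    (hU₀ : ∀ x ∈ J, HasDerivAt U₀ (u x) x)
    (A B C D : ℝ)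
    (W : Set (Fin 3 → ℝ)) (hWopen : IsOpen W) (hWconn : IsConnected W)
    (hWJ : ∀ p ∈ W, p 0 ∈ J)
    (hpos₁ : ∀ p ∈ W, 0 < A * p 2 + B) (hpos₂ : ∀ p ∈ W, 0 < C * U₀ (p 0) + D) :
    IsLocConfFlat W (fun p =>
      Matrix.diagonal
        ![(u (p 0)) ^ 2 * (A * p 2 + B) ^ 2 / (C * U₀ (p 0) + D) ^ 2,
          (C * U₀ (p 0) + D) ^ 2 / (A * p 2 + B) ^ 2, 1]) := by
  have hJconv : Convex ℝ J := hJconn.ordConnected.convex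
  have hU₀contJ : ContinuousOn U₀ J := fun x hx =>
    (hU₀ x hx).continuousAt.continuousWithinAt
  have hU₀mono : StrictMonoOn U₀ J := by
    apply strictMonoOn_of_deriv_pos hJconv hU₀contJ
    intro x hx
    rw [hJopen.interior_eq] at hx
    rw [(hU₀ x hx).deriv]
    exact hupos x hx
  have hU₀inj : Set.InjOn U₀ J := hU₀mono.injOn
  have hU₀C : ContDiffOn ℝ ∞ U₀ J := by
    rw [contDiffOn_infty_iff_deriv_of_isOpen hJopen]
    exact ⟨fun x hx => (hU₀ x hx).differentiableAt.differentiableWithinAt,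
      hu.congr fun x hx => (hU₀ x hx).deriv⟩
  have hproj0 : ContDiff ℝ ∞ (fun q : Fin 3 → ℝ => q 0) :=
    (ContinuousLinearMap.proj 0 : (Fin 3 → ℝ) →L[ℝ] ℝ).contDiff
  have hproj2 : ContDiff ℝ ∞ (fun q : Fin 3 → ℝ => q 2) :=
    (ContinuousLinearMap.proj 2 : (Fin 3 → ℝ) →L[ℝ] ℝ).contDiff
  have hsC : ContDiffOn ℝ ∞ (fun q : Fin 3 → ℝ => C * U₀ (q 0) + D) W := by
    have h1 : ContDiffOn ℝ ∞ (fun q : Fin 3 → ℝ => U₀ (q 0)) W :=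
      hU₀C.comp hproj0.contDiffOn (fun q hq => hWJ q hq)
    exact (contDiffOn_const.mul h1).add contDiffOn_const
  have htC : ContDiffOn ℝ ∞ (fun q : Fin 3 → ℝ => A * q 2 + B) W :=
    (contDiffOn_const.mul hproj2.contDiffOn).add contDiffOn_const
  have huC : ContDiffOn ℝ ∞ (fun q : Fin 3 → ℝ => u (q 0)) W :=
    hu.comp hproj0.contDiffOn (fun q hq => hWJ q hq)
  have hsne : ∀ q ∈ W, (C * U₀ (q 0) + D) ≠ 0 := fun q hq => ne_of_gt (hpos₂ q hq)
  have htne : ∀ q ∈ W, (A * q 2 + B) ≠ 0 := fun q hq => ne_of_gt (hpos₁ q hq)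
  have hsd : ∀ q ∈ W, HasDerivAt (fun x => C * U₀ x + D) (C * u (q 0)) (q 0) :=
    fun q hq => ((hU₀ (q 0) (hWJ q hq)).const_mul C).add_const D
  have htd : ∀ q : Fin 3 → ℝ, HasDerivAt (fun z => A * z + B) (A * 1) (q 2) :=
    fun q => ((hasDerivAt_id (q 2)).const_mul A).add_const B
  intro p hp
  by_cases hA : A = 0 <;> by_cases hC : C = 0
  · -- A = 0, C = 0
    subst hA; subst hC
    have hB : (0:ℝ) < B := by simpa using hpos₁ p hp
    have hD : (0:ℝ) < D := by simpa using hpos₂ p hp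
    refine ⟨W, hWopen, hp, le_refl _, fun _ => 1,
      fun q => ![(B / D) * U₀ (q 0), (D / B) * q 1, q 2], contDiffOn_const,
      fun q hq => one_pos, ?_, ?_, ?_⟩
    · -- smoothness
      apply contDiffOn_pi.2
      intro i
      fin_cases i
      · exact contDiffOn_const.mul (hU₀C.comp hproj0.contDiffOn hWJ)
      · exact (contDiff_const.mul
          ((ContinuousLinearMap.proj 1 : (Fin 3 → ℝ) →L[ℝ] ℝ).contDiff)).contDiffOn
      · exact hproj2.contDiffOn
    · -- injectivity
      intro q hq q' hq' he
      have e0 : (B / D) * U₀ (q 0) = (B / D) * U₀ (q' 0) := by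
        have := congrFun he 0; simpa using this
      have e1 : (D / B) * q 1 = (D / B) * q' 1 := by
        have := congrFun he 1; simpa using this
      have e2 : q 2 = q' 2 := by
        have := congrFun he 2; simpa using this
      have h0 : q 0 = q' 0 :=
        hU₀inj (hWJ q hq) (hWJ q' hq')
          (mul_left_cancel₀ (div_ne_zero (ne_of_gt hB) (ne_of_gt hD)) e0)
      have h1 : q 1 = q' 1 :=
        mul_left_cancel₀ (div_ne_zero (ne_of_gt hD) (ne_of_gt hB)) e1
      funext i
      fin_cases i
      · exact h0
      · exact h1
      · exact e2
    · -- metric identity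
      intro q hq
      set ψ : (Fin 3 → ℝ) → (Fin 3 → ℝ) :=
        fun q => ![(B / D) * U₀ (q 0), (D / B) * q 1, q 2] with hψ
      have h0 : HasFDerivAt (fun q : Fin 3 → ℝ => (B / D) * U₀ (q 0))
          (((B / D) * u (q 0)) • (proj 0 : (Fin 3 → ℝ) →L[ℝ] ℝ)) q :=
        coord_fderiv ((hU₀ (q 0) (hWJ q hq)).const_mul (B / D))
      have h1 : HasFDerivAt (fun q : Fin 3 → ℝ => (D / B) * q 1)
          ((D / B) • (proj 1 : (Fin 3 → ℝ) →L[ℝ] ℝ)) q := by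
        simpa using (hasFDerivAt_apply (𝕜 := ℝ) 1 q).const_mul (D / B)
      have h2 : HasFDerivAt (fun q : Fin 3 → ℝ => q 2)
          ((proj 2 : (Fin 3 → ℝ) →L[ℝ] ℝ)) q := hasFDerivAt_apply (𝕜 := ℝ) 2 q
      set L : Fin 3 → ((Fin 3 → ℝ) →L[ℝ] ℝ) :=
        ![((B / D) * u (q 0)) • (proj 0 : (Fin 3 → ℝ) →L[ℝ] ℝ),
          (D / B) • (proj 1 : (Fin 3 → ℝ) →L[ℝ] ℝ),
          (proj 2 : (Fin 3 → ℝ) →L[ℝ] ℝ)] with hL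
      have hΦ : HasFDerivAt ψ (ContinuousLinearMap.pi L) q := by
        apply hasFDerivAt_pi.2
        intro i
        fin_cases i
        · exact h0
        · exact h1
        · exact h2
      have hDm : ∀ i j, Dmat ψ q i j = L i (Pi.single j 1) := by
        intro i j; rw [Dmat, hΦ.fderiv]; rfl
      have hB' : B ≠ 0 := ne_of_gt hB
      have hD' : D ≠ 0 := ne_of_gt hD
      ext i j
      fin_cases i <;> fin_cases j <;>
        simp only [fin3_mk0, fin3_mk1, fin3_mk2, Matrix.mul_apply, Fin.sum_univ_three,
          Matrix.transpose_apply, hDm, hL,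
          Matrix.cons_val_zero, Matrix.cons_val_one, Matrix.head_cons, Matrix.cons_val_two,
          Matrix.tail_cons, ContinuousLinearMap.add_apply, ContinuousLinearMap.smul_apply,
          ContinuousLinearMap.proj_apply,
          Pi.single_eq_same, Pi.single_apply, Matrix.smul_apply,
          Matrix.diagonal_apply, smul_eq_mul] <;>
        norm_num [Fin.ext_iff] <;>
        field_simp <;>
        try ring
  · -- A = 0, C ≠ 0
    subst hA
    have hB : (0:ℝ) < B := by simpa using hpos₁ p hp
    set θf : (Fin 3 → ℝ) → ℝ := fun q => (C / B) * q 2 with hθf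
    have hθfC : ContDiffOn ℝ ∞ θf W := contDiffOn_const.mul hproj2.contDiffOn
    set V : Set (Fin 3 → ℝ) :=
      W ∩ θf ⁻¹' (Set.Ioo (θf p - Real.pi) (θf p + Real.pi)) with hV
    have hVopen : IsOpen V :=
      hθfC.continuousOn.isOpen_inter_preimage hWopen isOpen_Ioo
    have hpV : p ∈ V := ⟨hp, by
      simp only [Set.mem_preimage, Set.mem_Ioo]
      constructor <;> nlinarith [Real.pi_pos]⟩
    have hVW : V ⊆ W := Set.inter_subset_left
    obtain ⟨hψC, hψinj, hψeq⟩ :=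
      key V
        (fun q => (u (q 0)) ^ 2 * (0 * q 2 + B) ^ 2 / (C * U₀ (q 0) + D) ^ 2)
        (fun q => (C * U₀ (q 0) + D) ^ 2 / (0 * q 2 + B) ^ 2)
        (fun _ => 1)
        (fun q => C ^ 2 * (B ^ 2 / (C * U₀ (q 0) + D) ^ 2))
        (fun q => (C * U₀ (q 0) + D)⁻¹ * B ^ 2)
        θf
        (fun q => (-(C * u (q 0)) / (C * U₀ (q 0) + D) ^ 2) * B ^ 2)
        (fun _ => 0) (fun _ => 0) (fun _ => C / B) C
        (by -- hr
          intro q hq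
          have hqW := hVW hq
          obtain ⟨L, hL, e0, e1, e2⟩ := sep_deriv q
            ((hsd q hqW).inv (hsne q hqW)) (hasDerivAt_const (q 2) (B ^ 2))
          exact ⟨L, hL, by rw [e0], e1, by rw [e2]; ring⟩)
        (by -- hθ
          intro q hq
          refine ⟨((C / B) * 1) • (proj 2 : (Fin 3 → ℝ) →L[ℝ] ℝ),
            coord_fderiv ((hasDerivAt_id (q 2)).const_mul (C / B)), ?_, ?_, ?_⟩ <;>
            simp [Pi.single_apply])
        (by intro q hq
            exact mul_pos (inv_pos.2 (hpos₂ q (hVW hq))) (pow_pos hB 2))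
        (((hsC.inv hsne).mul contDiffOn_const).mono hVW)
        (hθfC.mono hVW)
        (by -- hI1
          intro q hq
          have h2 := hpos₂ q (hVW hq)
          field_simp
          ring)
        (by -- hI2
          intro q hq
          have h2 := hpos₂ q (hVW hq)
          have hB' : B ≠ 0 := ne_of_gt hB
          field_simp
          ring)
        (by intro q hq; ring)
        (by -- hI4
          intro q hq
          have h2 := hpos₂ q (hVW hq)
          have hB' : B ≠ 0 := ne_of_gt hB
          field_simp
          try ring
          rw [← mul_pow, mul_inv_cancel₀ hB', one_pow])
        (by -- window
          intro q hq q' hq'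
          obtain ⟨-, hq2⟩ := hq
          obtain ⟨-, hq2'⟩ := hq'
          simp only [Set.mem_preimage, Set.mem_Ioo] at hq2 hq2'
          rw [abs_lt]
          constructor <;> linarith [hq2.1, hq2.2, hq2'.1, hq2'.2])
        (by -- determination
          intro q hq q' hq' hre hte h1e
          have hqW := hVW hq; have hq'W := hVW hq'
          have hs1 := hpos₂ q hqW; have hs2 := hpos₂ q' hq'W
          have hs : C * U₀ (q 0) + D = C * U₀ (q' 0) + D := by
            have h := mul_right_cancel₀ (pow_ne_zero 2 (ne_of_gt hB)) hre
            exact inv_injective h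
          have h0 : q 0 = q' 0 := by
            apply hU₀inj (hWJ q hqW) (hWJ q' hq'W)
            have : C * (U₀ (q 0) - U₀ (q' 0)) = 0 := by linarith [hs]
            rcases mul_eq_zero.1 this with h' | h'
            · exact absurd h' hC
            · linarith
          have h2 : q 2 = q' 2 := by
            have hcb : C / B ≠ 0 := div_ne_zero hC (ne_of_gt hB)
            exact mul_left_cancel₀ hcb hte
          funext i
          fin_cases i
          · exact h0
          · exact h1e
          · exact h2)
        hC
    refine ⟨V, hVopen, hpV, hVW, _, _, ?_, ?_, hψC, hψinj, hψeq⟩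
    · exact (contDiffOn_const.mul (contDiffOn_const.div (hsC.pow 2)
        (fun q hq => pow_ne_zero 2 (hsne q hq)))).mono hVW
    · intro q hq
      have h2 := hpos₂ q (hVW hq)
      have hC2 : (0:ℝ) < C ^ 2 := by positivity
      have : 0 < B ^ 2 / (C * U₀ (q 0) + D) ^ 2 := by positivity
      exact mul_pos hC2 this
  · -- A ≠ 0, C = 0
    subst hC
    have hD : (0:ℝ) < D := by simpa using hpos₂ p hp
    have hA2 : (0:ℝ) < A ^ 2 := lt_of_le_of_ne (sq_nonneg A) (Ne.symm (pow_ne_zero 2 hA))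
    set θf : (Fin 3 → ℝ) → ℝ := fun q => (2 * A / D) * U₀ (q 0) with hθf
    have hθfC : ContDiffOn ℝ ∞ θf W :=
      contDiffOn_const.mul (hU₀C.comp hproj0.contDiffOn hWJ)
    set V : Set (Fin 3 → ℝ) :=
      W ∩ θf ⁻¹' (Set.Ioo (θf p - Real.pi) (θf p + Real.pi)) with hV
    have hVopen : IsOpen V :=
      hθfC.continuousOn.isOpen_inter_preimage hWopen isOpen_Ioo
    have hpV : p ∈ V := ⟨hp, by
      simp only [Set.mem_preimage, Set.mem_Ioo]
      constructor <;> nlinarith [Real.pi_pos]⟩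
    have hVW : V ⊆ W := Set.inter_subset_left
    obtain ⟨hψC, hψinj, hψeq⟩ :=
      key V
        (fun q => (u (q 0)) ^ 2 * (A * q 2 + B) ^ 2 / (0 * U₀ (q 0) + D) ^ 2)
        (fun q => (0 * U₀ (q 0) + D) ^ 2 / (A * q 2 + B) ^ 2)
        (fun _ => 1)
        (fun q => 4 * A ^ 2 * ((A * q 2 + B) ^ 2 / D ^ 2))
        (fun q => D⁻¹ * (A * q 2 + B) ^ 2)
        θf
        (fun _ => 0)
        (fun q => D⁻¹ * (2 * A * (A * q 2 + B)))
        (fun q => (2 * A / D) * u (q 0))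
        (fun _ => 0) (2 * A)
        (by -- hr
          intro q hq
          obtain ⟨L, hL, e0, e1, e2⟩ := sep_deriv q
            (hasDerivAt_const (q 0) D⁻¹) ((htd q).pow 2)
          exact ⟨L, hL, by rw [e0]; ring, e1, by rw [e2]; congr 1; push_cast; ring⟩)
        (by -- hθ
          intro q hq
          have hqW := hVW hq
          refine ⟨((2 * A / D) * u (q 0)) • (proj 0 : (Fin 3 → ℝ) →L[ℝ] ℝ),
            coord_fderiv ((hU₀ (q 0) (hWJ q hqW)).const_mul (2 * A / D)), ?_, ?_, ?_⟩ <;>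
            simp [Pi.single_apply])
        (by intro q hq
            exact mul_pos (inv_pos.2 hD) (pow_pos (hpos₁ q (hVW hq)) 2))
        ((contDiffOn_const.mul (htC.pow 2)).mono hVW)
        (hθfC.mono hVW)
        (by -- hI1
          intro q hq
          have h1 := hpos₁ q (hVW hq)
          have hD' : D ≠ 0 := ne_of_gt hD
          field_simp
          try ring
          field_simp)
        (by -- hI2
          intro q hq
          have hD' : D ≠ 0 := ne_of_gt hD
          field_simp
          try ring)
        (by intro q hq; ring)
        (by -- hI4
          intro q hq
          have h1 := hpos₁ q (hVW hq)
          have hD' : D ≠ 0 := ne_of_gt hD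
          field_simp
          try ring)
        (by -- window
          intro q hq q' hq'
          obtain ⟨-, hq2⟩ := hq
          obtain ⟨-, hq2'⟩ := hq'
          simp only [Set.mem_preimage, Set.mem_Ioo] at hq2 hq2'
          rw [abs_lt]
          constructor <;> linarith [hq2.1, hq2.2, hq2'.1, hq2'.2])
        (by -- determination
          intro q hq q' hq' hre hte h1e
          have hqW := hVW hq; have hq'W := hVW hq'
          have ht1 := hpos₁ q hqW; have ht2 := hpos₁ q' hq'W
          have h0 : q 0 = q' 0 := by
            apply hU₀inj (hWJ q hqW) (hWJ q' hq'W)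
            have had : 2 * A / D ≠ 0 :=
              div_ne_zero (mul_ne_zero two_ne_zero hA) (ne_of_gt hD)
            exact mul_left_cancel₀ had hte
          have h2 : q 2 = q' 2 := by
            have ht2eq : (A * q 2 + B) ^ 2 = (A * q' 2 + B) ^ 2 :=
              mul_left_cancel₀ (inv_ne_zero (ne_of_gt hD)) hre
            have hf : ((A * q 2 + B) - (A * q' 2 + B)) * ((A * q 2 + B) + (A * q' 2 + B)) = 0 := by
              linear_combination ht2eq
            rcases mul_eq_zero.1 hf with h' | h'
            · have : A * (q 2 - q' 2) = 0 := by linarith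
              rcases mul_eq_zero.1 this with h'' | h''
              · exact absurd h'' hA
              · linarith
            · linarith
          funext i
          fin_cases i
          · exact h0
          · exact h1e
          · exact h2)
        (mul_ne_zero two_ne_zero hA)
    refine ⟨V, hVopen, hpV, hVW, _, _, ?_, ?_, hψC, hψinj, hψeq⟩
    · exact (contDiffOn_const.mul ((htC.pow 2).div contDiffOn_const
        (fun q hq => pow_ne_zero 2 (ne_of_gt hD)))).mono hVW
    · intro q hq
      have h1 := hpos₁ q (hVW hq)
      have hp1 : (0:ℝ) < 4 * A ^ 2 := by linarith
      have hp2 : 0 < (A * q 2 + B) ^ 2 / D ^ 2 := by positivity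
      exact mul_pos hp1 hp2
  · -- A ≠ 0, C ≠ 0
    set θf : (Fin 3 → ℝ) → ℝ := fun q =>
      (2 * A / C) * Real.log (C * U₀ (q 0) + D) + (C / A) * Real.log (A * q 2 + B) with hθf
    have hθfC : ContDiffOn ℝ ∞ θf W :=
      (contDiffOn_const.mul (hsC.log hsne)).add (contDiffOn_const.mul (htC.log htne))
    set V : Set (Fin 3 → ℝ) :=
      W ∩ θf ⁻¹' (Set.Ioo (θf p - Real.pi) (θf p + Real.pi)) with hV
    have hVopen : IsOpen V :=
      hθfC.continuousOn.isOpen_inter_preimage hWopen isOpen_Ioo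
    have hpV : p ∈ V := ⟨hp, by
      simp only [Set.mem_preimage, Set.mem_Ioo]
      constructor <;> nlinarith [Real.pi_pos]⟩
    have hVW : V ⊆ W := Set.inter_subset_left
    have hm : (0:ℝ) < C ^ 2 + 4 * A ^ 2 := by positivity
    obtain ⟨hψC, hψinj, hψeq⟩ :=
      key V
        (fun q => (u (q 0)) ^ 2 * (A * q 2 + B) ^ 2 / (C * U₀ (q 0) + D) ^ 2)
        (fun q => (C * U₀ (q 0) + D) ^ 2 / (A * q 2 + B) ^ 2)
        (fun _ => 1)
        (fun q => (C ^ 2 + 4 * A ^ 2) * ((A * q 2 + B) ^ 2 / (C * U₀ (q 0) + D) ^ 2))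
        (fun q => (C * U₀ (q 0) + D)⁻¹ * (A * q 2 + B) ^ 2)
        θf
        (fun q => (-(C * u (q 0)) / (C * U₀ (q 0) + D) ^ 2) * (A * q 2 + B) ^ 2)
        (fun q => (C * U₀ (q 0) + D)⁻¹ * (2 * A * (A * q 2 + B)))
        (fun q => (2 * A / C) * (C * u (q 0) / (C * U₀ (q 0) + D)))
        (fun q => (C / A) * (A / (A * q 2 + B)))
        (Real.sqrt (C ^ 2 + 4 * A ^ 2))
        (by -- hr
          intro q hq
          have hqW := hVW hq
          obtain ⟨L, hL, e0, e1, e2⟩ := sep_deriv q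
            ((hsd q hqW).inv (hsne q hqW)) ((htd q).pow 2)
          refine ⟨L, hL, by rw [e0]; rfl, e1, ?_⟩
          rw [e2]; congr 1; push_cast; ring)
        (by -- hθ
          intro q hq
          have hqW := hVW hq
          obtain ⟨L, hL, e0, e1, e2⟩ := sum_deriv q
            (((hsd q hqW).log (hsne q hqW)).const_mul (2 * A / C))
            ((((htd q).log (htne q hqW))).const_mul (C / A))
          exact ⟨L, hL, by rw [e0], e1, by rw [e2]; norm_num⟩)
        (by intro q hq
            exact mul_pos (inv_pos.2 (hpos₂ q (hVW hq))) (pow_pos (hpos₁ q (hVW hq)) 2))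
        (((hsC.inv hsne).mul (htC.pow 2)).mono hVW)
        (hθfC.mono hVW)
        (by -- hI1
          intro q hq
          have h1 := hpos₁ q (hVW hq); have h2 := hpos₂ q (hVW hq)
          have hC' : C ≠ 0 := hC
          field_simp
          ring)
        (by -- hI2
          intro q hq
          have h1 := hpos₁ q (hVW hq); have h2 := hpos₂ q (hVW hq)
          have hA' : A ≠ 0 := hA
          field_simp
          ring)
        (by -- hI3
          intro q hq
          have h1 := hpos₁ q (hVW hq); have h2 := hpos₂ q (hVW hq)
          have hA' : A ≠ 0 := hA
          have hC' : C ≠ 0 := hC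
          field_simp
          ring)
        (by -- hI4
          intro q hq
          have h1 := hpos₁ q (hVW hq); have h2 := hpos₂ q (hVW hq)
          rw [Real.sq_sqrt (le_of_lt hm)]
          field_simp)
        (by -- window
          intro q hq q' hq'
          obtain ⟨-, hq2⟩ := hq
          obtain ⟨-, hq2'⟩ := hq'
          simp only [Set.mem_preimage, Set.mem_Ioo] at hq2 hq2'
          rw [abs_lt]
          constructor <;> linarith [hq2.1, hq2.2, hq2'.1, hq2'.2])
        (by -- determination
          intro q hq q' hq' hre hte h1e
          have hqW := hVW hq; have hq'W := hVW hq'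
          have hs1 := hpos₂ q hqW; have hs2 := hpos₂ q' hq'W
          have ht1 := hpos₁ q hqW; have ht2 := hpos₁ q' hq'W
          have hlr : -Real.log (C * U₀ (q 0) + D) + 2 * Real.log (A * q 2 + B)
              = -Real.log (C * U₀ (q' 0) + D) + 2 * Real.log (A * q' 2 + B) := by
            have h := congrArg Real.log hre
            rwa [Real.log_mul (inv_ne_zero (ne_of_gt hs1)) (pow_ne_zero 2 (ne_of_gt ht1)),
              Real.log_mul (inv_ne_zero (ne_of_gt hs2)) (pow_ne_zero 2 (ne_of_gt ht2)),
              Real.log_inv, Real.log_inv, Real.log_pow, Real.log_pow] at h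
          have hte' : (2 * A / C) * Real.log (C * U₀ (q 0) + D)
                + (C / A) * Real.log (A * q 2 + B)
              = (2 * A / C) * Real.log (C * U₀ (q' 0) + D)
                + (C / A) * Real.log (A * q' 2 + B) := hte
          have hA' : A ≠ 0 := hA
          have hC' : C ≠ 0 := hC
          have hY : Real.log (A * q 2 + B) = Real.log (A * q' 2 + B) := by
            have hcomb : (4 * A ^ 2 + C ^ 2) *
                (Real.log (A * q 2 + B) - Real.log (A * q' 2 + B)) = 0 := by
              field_simp at hte'
              linear_combination 2 * A ^ 2 * hlr + hte'
            have hne : (4 * A ^ 2 + C ^ 2) ≠ 0 := by positivity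
            have h := (mul_eq_zero.1 hcomb).resolve_left hne
            linarith
          have hX : Real.log (C * U₀ (q 0) + D) = Real.log (C * U₀ (q' 0) + D) := by
            linarith
          have ht : A * q 2 + B = A * q' 2 + B := by
            rw [← Real.exp_log ht1, ← Real.exp_log ht2, hY]
          have hs : C * U₀ (q 0) + D = C * U₀ (q' 0) + D := by
            rw [← Real.exp_log hs1, ← Real.exp_log hs2, hX]
          have h2 : q 2 = q' 2 := by
            have h := sub_eq_zero.2 ht
            have : A * (q 2 - q' 2) = 0 := by linarith [h]
            rcases mul_eq_zero.1 this with h' | h'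
            · exact absurd h' hA
            · linarith
          have h0 : q 0 = q' 0 := by
            apply hU₀inj (hWJ q hqW) (hWJ q' hq'W)
            have : C * (U₀ (q 0) - U₀ (q' 0)) = 0 := by linarith [hs]
            rcases mul_eq_zero.1 this with h' | h'
            · exact absurd h' hC
            · linarith
          funext i
          fin_cases i
          · exact h0
          · exact h1e
          · exact h2)
        (Real.sqrt_ne_zero'.2 hm)
    refine ⟨V, hVopen, hpV, hVW, _, _, ?_, ?_, hψC, hψinj, hψeq⟩
    · exact (contDiffOn_const.mul ((htC.pow 2).div (hsC.pow 2)
        (fun q hq => pow_ne_zero 2 (hsne q hq)))).mono hVW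
    · intro q hq
      have h1 := hpos₁ q (hVW hq); have h2 := hpos₂ q (hVW hq)
      have : 0 < (A * q 2 + B) ^ 2 / (C * U₀ (q 0) + D) ^ 2 := by positivity
      exact mul_pos hm this
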